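/- With notation as in the definition of Ŝ: Ŝ_{r₁,s₁,r₂,s₂}(0, 0, x₂, y₂; D₁, D₂) = 0 unless D₁/gcd(D₁, r₁s₁) divides both x₂ and y₂. Similarly, Ŝ_{r₁,s₁,r₂,s₂}(x₁, y₁, 0, 0; D₁, D₂) = 0 unless D₂/gcd(D₂, r₂s₂) divides both x₁ and y₁. -/

import Mathlib

open scoped BigOperators

/-- e(x) = exp(2πix). -/
noncomputable def e (x : ℝ) : ℂ := Complex.exp (2 * Real.pi * Complex.I * x)

/-- A choice of a pair `(Y, Z)` with `Y·b + Z·c ≡ 1 (mod D)`, when one exists. -/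
noncomputable def YZ (D : ℕ) (b c : ℤ) : ℤ × ℤ :=
  letI := Classical.propDecidable (∃ p : ℤ × ℤ, p.1 * b + p.2 * c ≡ 1 [ZMOD (D : ℤ)])
  if h : ∃ p : ℤ × ℤ, p.1 * b + p.2 * c ≡ 1 [ZMOD (D : ℤ)] then h.choose else (0, 0)

/-- The long Weyl element GL(3) Kloosterman sum
`S(n₁,m₂,m₁,n₂;D₁,D₂) = ∑ e((n₁B₁ + m₁(Y₁D₂ − Z₁B₂))/D₁ + (m₂B₂ + n₂(Y₂D₁ − Z₂B₁))/D₂)`,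
where the sum runs over `B₁,C₁ mod D₁` and `B₂,C₂ mod D₂` with `gcd(B_j,C_j,D_j)=1` and
`D₁C₂ + B₁B₂ + D₂C₁ ≡ 0 mod D₁D₂`, and `Y_jB_j + Z_jC_j ≡ 1 mod D_j`. -/
noncomputable def SKl (n₁ m₂ m₁ n₂ : ℤ) (D₁ D₂ : ℕ) : ℂ :=
  ∑ b₁ ∈ Finset.range D₁, ∑ c₁ ∈ Finset.range D₁,
    ∑ b₂ ∈ Finset.range D₂, ∑ c₂ ∈ Finset.range D₂,
      if Nat.gcd (Nat.gcd b₁ c₁) D₁ = 1 ∧ Nat.gcd (Nat.gcd b₂ c₂) D₂ = 1 ∧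
          (D₁ : ℤ) * c₂ + (b₁ : ℤ) * b₂ + (D₂ : ℤ) * c₁ ≡ 0 [ZMOD ((D₁ : ℤ) * D₂)] then
        e ((((n₁ * b₁ + m₁ * ((YZ D₁ (b₁ : ℤ) (c₁ : ℤ)).1 * D₂
                - (YZ D₁ (b₁ : ℤ) (c₁ : ℤ)).2 * b₂) : ℤ)) : ℝ) / (D₁ : ℝ)
          + (((m₂ * b₂ + n₂ * ((YZ D₂ (b₂ : ℤ) (c₂ : ℤ)).1 * D₁
                - (YZ D₂ (b₂ : ℤ) (c₂ : ℤ)).2 * b₁) : ℤ)) : ℝ) / (D₂ : ℝ))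
      else 0

/-- The normalized Fourier transform of the long Weyl element Kloosterman sum:
`Ŝ_{r₁,s₁,r₂,s₂}(x₁,y₁,x₂,y₂;D₁,D₂) = (1/(D₁²D₂²)) ∑_{n₁,m₁ mod D₁} ∑_{n₂,m₂ mod D₂}
  S(n₁r₁, m₂r₂, m₁s₁, n₂s₂; D₁,D₂) e(−(x₁m₁+y₁n₁)/D₁ − (x₂m₂+y₂n₂)/D₂)`. -/
noncomputable def Shat (r₁ s₁ r₂ s₂ x₁ y₁ x₂ y₂ : ℤ) (D₁ D₂ : ℕ) : ℂ :=
  (1 / ((D₁ : ℂ) ^ 2 * (D₂ : ℂ) ^ 2)) *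
    ∑ n₁ ∈ Finset.range D₁, ∑ m₁ ∈ Finset.range D₁,
      ∑ n₂ ∈ Finset.range D₂, ∑ m₂ ∈ Finset.range D₂,
        SKl ((n₁ : ℤ) * r₁) ((m₂ : ℤ) * r₂) ((m₁ : ℤ) * s₁) ((n₂ : ℤ) * s₂) D₁ D₂ *
          e (-(((x₁ * (m₁ : ℤ) + y₁ * (n₁ : ℤ) : ℤ) : ℝ) / (D₁ : ℝ))
            - ((x₂ * (m₂ : ℤ) + y₂ * (n₂ : ℤ) : ℤ) : ℝ) / (D₂ : ℝ))


/-! ### Auxiliary lemmas -/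

lemma e_add' (x y : ℝ) : e (x + y) = e x * e y := by
  rw [e, e, e, ← Complex.exp_add]; congr 1; push_cast; ring

lemma e_nat_mul' (n : ℕ) (x : ℝ) : e ((n : ℝ) * x) = e x ^ n := by
  rw [e, e, ← Complex.exp_nat_mul]; congr 1; push_cast; ring

lemma char_dvd (D : ℕ) (hD : 0 < D) (A : ℤ)
    (h : (∑ n ∈ Finset.range D, e ((((n : ℤ) * A : ℤ) : ℝ) / (D : ℝ))) ≠ 0) :
    (D : ℤ) ∣ A := by
  have hD0 : (D : ℂ) ≠ 0 := Nat.cast_ne_zero.mpr hD.ne'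
  have hterm : ∀ n : ℕ, e ((((n : ℤ) * A : ℤ) : ℝ) / (D : ℝ)) = e ((A : ℝ) / D) ^ n := by
    intro n
    rw [← e_nat_mul']
    congr 1
    push_cast
    ring
  simp only [hterm] at h
  by_cases hz : e ((A : ℝ) / D) = 1
  · rw [e, Complex.exp_eq_one_iff] at hz
    obtain ⟨k, hk⟩ := hz
    have hπ : (2 * (Real.pi : ℂ) * Complex.I) ≠ 0 := by
      simp [Real.pi_ne_zero, Complex.I_ne_zero]
    have h3 : (2 * (Real.pi : ℂ) * Complex.I) * (A : ℂ)
        = (2 * (Real.pi : ℂ) * Complex.I) * ((k : ℂ) * D) := by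
      push_cast at hk
      field_simp at hk
      linear_combination (2 * (Real.pi : ℂ) * Complex.I) * hk
    have hA : (A : ℂ) = (k : ℂ) * D := mul_left_cancel₀ hπ h3
    have : A = k * D := by exact_mod_cast hA
    exact ⟨k, by linarith⟩
  · exfalso
    apply h
    rw [geom_sum_eq hz]
    have hpow : e ((A : ℝ) / D) ^ D = 1 := by
      rw [← e_nat_mul']
      have h1 : (D : ℝ) * ((A : ℝ) / D) = (A : ℝ) := by
        field_simp
      rw [h1, e]
      rw [← Complex.exp_int_mul_two_pi_mul_I A]
      congr 1
      push_cast
      ring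
    rw [hpow, sub_self, zero_div]

lemma sum4_eq {M : Type*} [AddCommMonoid M] (A B C D : Finset ℕ) (f : ℕ → ℕ → ℕ → ℕ → M) :
    (∑ a ∈ A, ∑ b ∈ B, ∑ c ∈ C, ∑ d ∈ D, f a b c d)
    = ∑ p ∈ A ×ˢ B ×ˢ C ×ˢ D, f p.1 p.2.1 p.2.2.1 p.2.2.2 := by
  simp [Finset.sum_product]

lemma sum_swap8 {M : Type*} [AddCommMonoid M] (A₁ A₂ A₃ A₄ B₁ B₂ B₃ B₄ : Finset ℕ)
    (F : ℕ → ℕ → ℕ → ℕ → ℕ → ℕ → ℕ → ℕ → M) :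
    (∑ a₁ ∈ A₁, ∑ a₂ ∈ A₂, ∑ a₃ ∈ A₃, ∑ a₄ ∈ A₄,
      ∑ b₁ ∈ B₁, ∑ b₂ ∈ B₂, ∑ b₃ ∈ B₃, ∑ b₄ ∈ B₄, F a₁ a₂ a₃ a₄ b₁ b₂ b₃ b₄)
    = ∑ b₁ ∈ B₁, ∑ b₂ ∈ B₂, ∑ b₃ ∈ B₃, ∑ b₄ ∈ B₄,
      ∑ a₁ ∈ A₁, ∑ a₂ ∈ A₂, ∑ a₃ ∈ A₃, ∑ a₄ ∈ A₄, F a₁ a₂ a₃ a₄ b₁ b₂ b₃ b₄ := by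
  have l : ∀ a₁ a₂ a₃ a₄, (∑ b₁ ∈ B₁, ∑ b₂ ∈ B₂, ∑ b₃ ∈ B₃, ∑ b₄ ∈ B₄, F a₁ a₂ a₃ a₄ b₁ b₂ b₃ b₄)
      = ∑ q ∈ B₁ ×ˢ B₂ ×ˢ B₃ ×ˢ B₄, F a₁ a₂ a₃ a₄ q.1 q.2.1 q.2.2.1 q.2.2.2 :=
    fun a₁ a₂ a₃ a₄ => sum4_eq _ _ _ _ _
  simp only [l]
  rw [sum4_eq A₁ A₂ A₃ A₄ (fun a₁ a₂ a₃ a₄ => ∑ q ∈ B₁ ×ˢ B₂ ×ˢ B₃ ×ˢ B₄,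
      F a₁ a₂ a₃ a₄ q.1 q.2.1 q.2.2.1 q.2.2.2)]
  rw [Finset.sum_comm]
  rw [sum4_eq B₁ B₂ B₃ B₄ (fun b₁ b₂ b₃ b₄ => ∑ a₁ ∈ A₁, ∑ a₂ ∈ A₂, ∑ a₃ ∈ A₃, ∑ a₄ ∈ A₄,
      F a₁ a₂ a₃ a₄ b₁ b₂ b₃ b₄)]
  apply Finset.sum_congr rfl
  intro q _
  exact (sum4_eq A₁ A₂ A₃ A₄ (fun a₁ a₂ a₃ a₄ => F a₁ a₂ a₃ a₄ q.1 q.2.1 q.2.2.1 q.2.2.2)).symm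

lemma sum_factor4 (A B C D : Finset ℕ) (f g h k : ℕ → ℂ) :
    (∑ a ∈ A, ∑ b ∈ B, ∑ c ∈ C, ∑ d ∈ D, f a * g b * h c * k d)
    = (∑ a ∈ A, f a) * (∑ b ∈ B, g b) * (∑ c ∈ C, h c) * (∑ d ∈ D, k d) := by
  have h1 : ∀ a b c : ℕ, (∑ d ∈ D, f a * g b * h c * k d)
      = f a * g b * h c * ∑ d ∈ D, k d := fun a b c => by rw [← Finset.mul_sum]
  have h2 : ∀ a b : ℕ, (∑ c ∈ C, f a * g b * h c * ∑ d ∈ D, k d)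
      = f a * g b * (∑ c ∈ C, h c) * ∑ d ∈ D, k d := by
    intro a b; rw [← Finset.sum_mul, ← Finset.mul_sum]
  have h3 : ∀ a : ℕ, (∑ b ∈ B, f a * g b * (∑ c ∈ C, h c) * ∑ d ∈ D, k d)
      = f a * (∑ b ∈ B, g b) * (∑ c ∈ C, h c) * ∑ d ∈ D, k d := by
    intro a; rw [← Finset.sum_mul, ← Finset.sum_mul, ← Finset.mul_sum]
  simp only [h1, h2, h3]
  rw [← Finset.sum_mul, ← Finset.sum_mul, ← Finset.sum_mul]

lemma div_gcd_dvd (D : ℕ) (hD : 0 < D) (a c : ℤ) (h : (D : ℤ) ∣ a * c) :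
    ((D / Int.gcd (D : ℤ) a : ℕ) : ℤ) ∣ c := by
  set g : ℕ := Int.gcd (D : ℤ) a with hgdef
  have hgd : (g : ℤ) ∣ (D : ℤ) := Int.gcd_dvd_left _ _
  have hga : (g : ℤ) ∣ a := Int.gcd_dvd_right _ _
  have hg0 : (g : ℤ) ≠ 0 := by
    simp only [ne_eq, Nat.cast_eq_zero, hgdef]
    rw [Int.gcd_eq_zero_iff]
    intro ⟨h1, _⟩
    exact_mod_cast absurd h1 (by exact_mod_cast hD.ne')
  have hgpos : 0 < Int.gcd (D : ℤ) a := Nat.pos_of_ne_zero (by exact_mod_cast hg0)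
  have hQ : ((D / g : ℕ) : ℤ) = (D : ℤ) / (g : ℤ) := by
    rw [Int.natCast_div]
  have hDeq : (D : ℤ) = (g : ℤ) * ((D : ℤ) / g) := (Int.mul_ediv_cancel' hgd).symm
  have haeq : a = (g : ℤ) * (a / g) := (Int.mul_ediv_cancel' hga).symm
  have hcop : Int.gcd ((D : ℤ) / g) (a / g) = 1 := Int.gcd_div_gcd_div_gcd hgpos
  have h2 : ((D : ℤ) / g) ∣ (a / g) * c := by
    have h3 : (g : ℤ) * ((D : ℤ) / g) ∣ (g : ℤ) * ((a / g) * c) := by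
      rw [← hDeq, ← mul_assoc, ← haeq]
      exact h
    exact (mul_dvd_mul_iff_left hg0).mp h3
  rw [hQ]
  exact (Int.isCoprime_iff_gcd_eq_one.mpr hcop).dvd_of_dvd_mul_left h2

lemma YZ_spec (D b c : ℕ) (h : Nat.gcd (Nat.gcd b c) D = 1) :
    (YZ D (b : ℤ) (c : ℤ)).1 * (b : ℤ) + (YZ D (b : ℤ) (c : ℤ)).2 * (c : ℤ) ≡ 1 [ZMOD (D : ℤ)] := by
  have hex : ∃ p : ℤ × ℤ, p.1 * (b : ℤ) + p.2 * (c : ℤ) ≡ 1 [ZMOD (D : ℤ)] := by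
    have hbez1 : ((Int.gcd (b : ℤ) (c : ℤ) : ℕ) : ℤ)
        = (b : ℤ) * Int.gcdA (b : ℤ) (c : ℤ) + (c : ℤ) * Int.gcdB (b : ℤ) (c : ℤ) :=
      Int.gcd_eq_gcd_ab _ _
    have hgc : (Int.gcd (b : ℤ) (c : ℤ) : ℕ) = Nat.gcd b c := Int.gcd_natCast_natCast b c
    have hg1 : ((Int.gcd ((Nat.gcd b c : ℕ) : ℤ) (D : ℤ) : ℕ) : ℤ) = 1 := by
      rw [Int.gcd_natCast_natCast, h]; norm_num
    have hbez2 : ((Int.gcd ((Nat.gcd b c : ℕ) : ℤ) (D : ℤ) : ℕ) : ℤ)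
        = ((Nat.gcd b c : ℕ) : ℤ) * Int.gcdA ((Nat.gcd b c : ℕ) : ℤ) (D : ℤ)
          + (D : ℤ) * Int.gcdB ((Nat.gcd b c : ℕ) : ℤ) (D : ℤ) := Int.gcd_eq_gcd_ab _ _
    set w := Int.gcdA ((Nat.gcd b c : ℕ) : ℤ) (D : ℤ)
    set v := Int.gcdB ((Nat.gcd b c : ℕ) : ℤ) (D : ℤ)
    set p := Int.gcdA (b : ℤ) (c : ℤ)
    set q := Int.gcdB (b : ℤ) (c : ℤ)
    rw [hg1] at hbez2
    rw [hgc] at hbez1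
    refine ⟨(w * p, w * q), ?_⟩
    exact Int.modEq_iff_dvd.mpr ⟨v, by linear_combination hbez2 + w * hbez1⟩
  unfold YZ
  rw [dif_pos hex]
  exact hex.choose_spec

lemma key_facts (D₁ D₂ : ℕ) (hD₁ : 0 < D₁) (r s b₁ c₁ b₂ c₂ Y Z : ℤ)
    (h1 : Y * b₁ + Z * c₁ ≡ 1 [ZMOD (D₁ : ℤ)])
    (hc : ((D₁ : ℤ) * (D₂ : ℤ)) ∣ ((D₁ : ℤ) * c₂ + b₁ * b₂ + (D₂ : ℤ) * c₁))
    (d1 : (D₁ : ℤ) ∣ r * b₁)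
    (d2 : (D₁ : ℤ) ∣ s * (Y * (D₂ : ℤ) - Z * b₂)) :
    ((D₁ / Int.gcd (D₁ : ℤ) (r * s) : ℕ) : ℤ) ∣ (D₂ : ℤ) ∧
    ((D₁ / Int.gcd (D₁ : ℤ) (r * s) : ℕ) : ℤ) ∣ b₁ ∧
    ((D₁ / Int.gcd (D₁ : ℤ) (r * s) : ℕ) : ℤ) ∣ b₂ := by
  have e1 : (D₁ : ℤ) ∣ (Y * b₁ + Z * c₁ - 1) := by
    have h' := Int.ModEq.dvd h1
    obtain ⟨u, hu⟩ := h'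
    exact ⟨-u, by linarith⟩
  have e2 : (D₁ : ℤ) ∣ ((D₁ : ℤ) * c₂ + b₁ * b₂ + (D₂ : ℤ) * c₁) :=
    dvd_trans (dvd_mul_right (D₁ : ℤ) (D₂ : ℤ)) hc
  obtain ⟨u, hu⟩ := e1
  obtain ⟨v, hv⟩ := e2
  obtain ⟨w, hw⟩ := d2
  obtain ⟨t, ht⟩ := d1
  have hA : (D₁ : ℤ) ∣ s * b₂ :=
    ⟨-(s * b₂ * u) + s * Y * v - c₁ * w - s * Y * c₂, by
      linear_combination (-(s * b₂)) * hu + (s * Y) * hv + (-c₁) * hw⟩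
  have hB : (D₁ : ℤ) ∣ r * s * (D₂ : ℤ) := by
    refine ⟨-(r * s * (D₂ : ℤ) * u) + (s * (D₂ : ℤ) * Y - Z * s * b₂) * t
      + r * Z * s * v - r * Z * s * c₂, ?_⟩
    linear_combination (-(r * s * (D₂ : ℤ))) * hu + (s * (D₂ : ℤ) * Y - Z * s * b₂) * ht
      + (r * Z * s) * hv
  obtain ⟨a, ha⟩ := hA
  exact ⟨div_gcd_dvd D₁ hD₁ (r * s) (D₂ : ℤ) hB,
    div_gcd_dvd D₁ hD₁ (r * s) b₁ ⟨s * t, by linear_combination s * ht⟩,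
    div_gcd_dvd D₁ hD₁ (r * s) b₂ ⟨r * a, by linear_combination r * ha⟩⟩

lemma shat_eq (r₁ s₁ r₂ s₂ x₁ y₁ x₂ y₂ : ℤ) (D₁ D₂ : ℕ) :
    Shat r₁ s₁ r₂ s₂ x₁ y₁ x₂ y₂ D₁ D₂
    = (1 / ((D₁ : ℂ) ^ 2 * (D₂ : ℂ) ^ 2)) *
      ∑ b₁ ∈ Finset.range D₁, ∑ c₁ ∈ Finset.range D₁,
        ∑ b₂ ∈ Finset.range D₂, ∑ c₂ ∈ Finset.range D₂,
          if Nat.gcd (Nat.gcd b₁ c₁) D₁ = 1 ∧ Nat.gcd (Nat.gcd b₂ c₂) D₂ = 1 ∧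
              (D₁ : ℤ) * c₂ + (b₁ : ℤ) * b₂ + (D₂ : ℤ) * c₁ ≡ 0 [ZMOD ((D₁ : ℤ) * D₂)] then
            (∑ n ∈ Finset.range D₁, e ((((n : ℤ) * (r₁ * b₁ - y₁) : ℤ) : ℝ) / (D₁ : ℝ))) *
            (∑ n ∈ Finset.range D₁, e ((((n : ℤ) * (s₁ * ((YZ D₁ (b₁ : ℤ) (c₁ : ℤ)).1 * D₂
                - (YZ D₁ (b₁ : ℤ) (c₁ : ℤ)).2 * b₂) - x₁) : ℤ) : ℝ) / (D₁ : ℝ))) *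
            (∑ n ∈ Finset.range D₂, e ((((n : ℤ) * (s₂ * ((YZ D₂ (b₂ : ℤ) (c₂ : ℤ)).1 * D₁
                - (YZ D₂ (b₂ : ℤ) (c₂ : ℤ)).2 * b₁) - y₂) : ℤ) : ℝ) / (D₂ : ℝ))) *
            (∑ n ∈ Finset.range D₂, e ((((n : ℤ) * (r₂ * b₂ - x₂) : ℤ) : ℝ) / (D₂ : ℝ)))
          else 0 := by
  simp only [Shat, SKl]
  congr 1
  conv_lhs => simp only [Finset.sum_mul, ite_mul, zero_mul]
  rw [sum_swap8 (Finset.range D₁) (Finset.range D₁) (Finset.range D₂) (Finset.range D₂)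
    (Finset.range D₁) (Finset.range D₁) (Finset.range D₂) (Finset.range D₂)]
  refine Finset.sum_congr rfl fun b₁ _ => Finset.sum_congr rfl fun c₁ _ =>
    Finset.sum_congr rfl fun b₂ _ => Finset.sum_congr rfl fun c₂ _ => ?_
  by_cases hcond : Nat.gcd (Nat.gcd b₁ c₁) D₁ = 1 ∧ Nat.gcd (Nat.gcd b₂ c₂) D₂ = 1 ∧
      (D₁ : ℤ) * c₂ + (b₁ : ℤ) * b₂ + (D₂ : ℤ) * c₁ ≡ 0 [ZMOD ((D₁ : ℤ) * D₂)]
  · have hpos : ∀ X : ℂ, (if Nat.gcd (Nat.gcd b₁ c₁) D₁ = 1 ∧ Nat.gcd (Nat.gcd b₂ c₂) D₂ = 1 ∧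
        (D₁ : ℤ) * c₂ + (b₁ : ℤ) * b₂ + (D₂ : ℤ) * c₁ ≡ 0 [ZMOD ((D₁ : ℤ) * D₂)] then X else 0)
        = X := fun X => if_pos hcond
    simp only [hpos]
    rw [← sum_factor4]
    refine Finset.sum_congr rfl fun n₁ _ => Finset.sum_congr rfl fun m₁ _ =>
      Finset.sum_congr rfl fun n₂ _ => Finset.sum_congr rfl fun m₂ _ => ?_
    simp only [← e_add']
    congr 1
    push_cast
    ring
  · have hneg : ∀ X : ℂ, (if Nat.gcd (Nat.gcd b₁ c₁) D₁ = 1 ∧ Nat.gcd (Nat.gcd b₂ c₂) D₂ = 1 ∧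
        (D₁ : ℤ) * c₂ + (b₁ : ℤ) * b₂ + (D₂ : ℤ) * c₁ ≡ 0 [ZMOD ((D₁ : ℤ) * D₂)] then X else 0)
        = 0 := fun X => if_neg hcond
    simp only [hneg, Finset.sum_const_zero]

lemma shat_extract (r₁ s₁ r₂ s₂ x₁ y₁ x₂ y₂ : ℤ) (D₁ D₂ : ℕ) (hD₁ : 0 < D₁) (hD₂ : 0 < D₂)
    (h : Shat r₁ s₁ r₂ s₂ x₁ y₁ x₂ y₂ D₁ D₂ ≠ 0) :
    ∃ b₁ c₁ b₂ c₂ : ℕ,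
      Nat.gcd (Nat.gcd b₁ c₁) D₁ = 1 ∧ Nat.gcd (Nat.gcd b₂ c₂) D₂ = 1 ∧
      ((D₁ : ℤ) * (D₂ : ℤ)) ∣ ((D₁ : ℤ) * c₂ + (b₁ : ℤ) * b₂ + (D₂ : ℤ) * c₁) ∧
      (D₁ : ℤ) ∣ (r₁ * b₁ - y₁) ∧
      (D₁ : ℤ) ∣ (s₁ * ((YZ D₁ (b₁ : ℤ) (c₁ : ℤ)).1 * D₂
          - (YZ D₁ (b₁ : ℤ) (c₁ : ℤ)).2 * b₂) - x₁) ∧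
      (D₂ : ℤ) ∣ (s₂ * ((YZ D₂ (b₂ : ℤ) (c₂ : ℤ)).1 * D₁
          - (YZ D₂ (b₂ : ℤ) (c₂ : ℤ)).2 * b₁) - y₂) ∧
      (D₂ : ℤ) ∣ (r₂ * b₂ - x₂) := by
  rw [shat_eq] at h
  have hsum := right_ne_zero_of_mul h
  obtain ⟨b₁, -, h1⟩ := Finset.exists_ne_zero_of_sum_ne_zero hsum
  obtain ⟨c₁, -, h2⟩ := Finset.exists_ne_zero_of_sum_ne_zero h1
  obtain ⟨b₂, -, h3⟩ := Finset.exists_ne_zero_of_sum_ne_zero h2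
  obtain ⟨c₂, -, h4⟩ := Finset.exists_ne_zero_of_sum_ne_zero h3
  by_cases hcond : Nat.gcd (Nat.gcd b₁ c₁) D₁ = 1 ∧ Nat.gcd (Nat.gcd b₂ c₂) D₂ = 1 ∧
      (D₁ : ℤ) * c₂ + (b₁ : ℤ) * b₂ + (D₂ : ℤ) * c₁ ≡ 0 [ZMOD ((D₁ : ℤ) * D₂)]
  · rw [if_pos hcond] at h4
    obtain ⟨hg1, hg2, hcong⟩ := hcond
    have hS1 := left_ne_zero_of_mul (left_ne_zero_of_mul (left_ne_zero_of_mul h4))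
    have hS2 := right_ne_zero_of_mul (left_ne_zero_of_mul (left_ne_zero_of_mul h4))
    have hS3 := right_ne_zero_of_mul (left_ne_zero_of_mul h4)
    have hS4 := right_ne_zero_of_mul h4
    exact ⟨b₁, c₁, b₂, c₂, hg1, hg2,
      (Int.modEq_zero_iff_dvd).mp hcong,
      char_dvd D₁ hD₁ _ hS1, char_dvd D₁ hD₁ _ hS2,
      char_dvd D₂ hD₂ _ hS3, char_dvd D₂ hD₂ _ hS4⟩
  · rw [if_neg hcond] at h4
    exact absurd rfl h4

theorem shat_degenerate_divisibility (r₁ s₁ r₂ s₂ : ℤ)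
    (hr₁ : r₁ ≠ 0) (hs₁ : s₁ ≠ 0) (hr₂ : r₂ ≠ 0) (hs₂ : s₂ ≠ 0)
    (D₁ D₂ : ℕ) (hD₁ : 0 < D₁) (hD₂ : 0 < D₂) :
    (∀ x₂ y₂ : ℤ, Shat r₁ s₁ r₂ s₂ 0 0 x₂ y₂ D₁ D₂ ≠ 0 →
      ((D₁ / Int.gcd (D₁ : ℤ) (r₁ * s₁) : ℕ) : ℤ) ∣ x₂ ∧
        ((D₁ / Int.gcd (D₁ : ℤ) (r₁ * s₁) : ℕ) : ℤ) ∣ y₂) ∧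
    (∀ x₁ y₁ : ℤ, Shat r₁ s₁ r₂ s₂ x₁ y₁ 0 0 D₁ D₂ ≠ 0 →
      ((D₂ / Int.gcd (D₂ : ℤ) (r₂ * s₂) : ℕ) : ℤ) ∣ x₁ ∧
        ((D₂ / Int.gcd (D₂ : ℤ) (r₂ * s₂) : ℕ) : ℤ) ∣ y₁) := by
  constructor
  · intro x₂ y₂ h
    obtain ⟨b₁, c₁, b₂, c₂, hg1, hg2, hcong, dn1, dm1, dn2, dm2⟩ :=
      shat_extract r₁ s₁ r₂ s₂ 0 0 x₂ y₂ D₁ D₂ hD₁ hD₂ h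
    rw [sub_zero] at dn1 dm1
    have hYZ := YZ_spec D₁ b₁ c₁ hg1
    obtain ⟨hQD₂, hQb₁, hQb₂⟩ := key_facts D₁ D₂ hD₁ r₁ s₁ (b₁ : ℤ) (c₁ : ℤ) (b₂ : ℤ) (c₂ : ℤ)
      (YZ D₁ (b₁ : ℤ) (c₁ : ℤ)).1 (YZ D₁ (b₁ : ℤ) (c₁ : ℤ)).2 hYZ hcong dn1 dm1
    have hQD₁ : ((D₁ / Int.gcd (D₁ : ℤ) (r₁ * s₁) : ℕ) : ℤ) ∣ (D₁ : ℤ) := by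
      apply Int.natCast_dvd_natCast.mpr
      exact Nat.div_dvd_of_dvd (Int.natCast_dvd_natCast.mp (Int.gcd_dvd_left _ _))
    set Q : ℤ := ((D₁ / Int.gcd (D₁ : ℤ) (r₁ * s₁) : ℕ) : ℤ)
    constructor
    · have h1 : Q ∣ (r₂ * b₂ - x₂) := dvd_trans hQD₂ dm2
      have h2 : Q ∣ r₂ * (b₂ : ℤ) := hQb₂.mul_left r₂
      have := dvd_sub h2 h1
      simpa using this
    · have h1 : Q ∣ (s₂ * ((YZ D₂ (b₂ : ℤ) (c₂ : ℤ)).1 * D₁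
          - (YZ D₂ (b₂ : ℤ) (c₂ : ℤ)).2 * b₁) - y₂) := dvd_trans hQD₂ dn2
      have h2 : Q ∣ s₂ * ((YZ D₂ (b₂ : ℤ) (c₂ : ℤ)).1 * D₁
          - (YZ D₂ (b₂ : ℤ) (c₂ : ℤ)).2 * b₁) :=
        Dvd.dvd.mul_left (dvd_sub (hQD₁.mul_left _) (hQb₁.mul_left _)) s₂
      have := dvd_sub h2 h1
      simpa using this
  · intro x₁ y₁ h
    obtain ⟨b₁, c₁, b₂, c₂, hg1, hg2, hcong, dn1, dm1, dn2, dm2⟩ :=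
      shat_extract r₁ s₁ r₂ s₂ x₁ y₁ 0 0 D₁ D₂ hD₁ hD₂ h
    rw [sub_zero] at dn2 dm2
    have hYZ := YZ_spec D₂ b₂ c₂ hg2
    have hcong' : ((D₂ : ℤ) * (D₁ : ℤ)) ∣ ((D₂ : ℤ) * c₁ + (b₂ : ℤ) * b₁ + (D₁ : ℤ) * c₂) := by
      obtain ⟨k, hk⟩ := hcong
      exact ⟨k, by linear_combination hk⟩
    obtain ⟨hQD₁, hQb₂, hQb₁⟩ := key_facts D₂ D₁ hD₂ r₂ s₂ (b₂ : ℤ) (c₂ : ℤ) (b₁ : ℤ) (c₁ : ℤ)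
      (YZ D₂ (b₂ : ℤ) (c₂ : ℤ)).1 (YZ D₂ (b₂ : ℤ) (c₂ : ℤ)).2 hYZ hcong' dm2 dn2
    have hQD₂ : ((D₂ / Int.gcd (D₂ : ℤ) (r₂ * s₂) : ℕ) : ℤ) ∣ (D₂ : ℤ) := by
      apply Int.natCast_dvd_natCast.mpr
      exact Nat.div_dvd_of_dvd (Int.natCast_dvd_natCast.mp (Int.gcd_dvd_left _ _))
    set Q : ℤ := ((D₂ / Int.gcd (D₂ : ℤ) (r₂ * s₂) : ℕ) : ℤ)
    constructor
    · have h1 : Q ∣ (s₁ * ((YZ D₁ (b₁ : ℤ) (c₁ : ℤ)).1 * D₂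
          - (YZ D₁ (b₁ : ℤ) (c₁ : ℤ)).2 * b₂) - x₁) := dvd_trans hQD₁ dm1
      have h2 : Q ∣ s₁ * ((YZ D₁ (b₁ : ℤ) (c₁ : ℤ)).1 * D₂
          - (YZ D₁ (b₁ : ℤ) (c₁ : ℤ)).2 * b₂) :=
        Dvd.dvd.mul_left (dvd_sub (hQD₂.mul_left _) (hQb₂.mul_left _)) s₁
      have := dvd_sub h2 h1
      simpa using this
    · have h1 : Q ∣ (r₁ * b₁ - y₁) := dvd_trans hQD₁ dn1
      have h2 : Q ∣ r₁ * (b₁ : ℤ) := hQb₁.mul_left r₁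
      have := dvd_sub h2 h1
      simpa using this
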